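/- Assume: (1) x ↦ Φ(|x|), v ↦ G(v), x ↦ F(|x|²)x are locally Lipschitz; (2) G(−v) = −G(v) and G(v)·v ≥ G*|v|^{2α} for all v with G* > 0 and α ∈ [1,5/4); (3) Φ(|x|) ≥ Φ* > 0, |F(|x|²)x| ≤ F* for all x, with F* < 2^{α−1/2} Φ* G*; (4) |Φ(|x|)G(v)| ≤ C₀(1 + |x| + |v|) for all x, v. Let f₀ be a Borel probability measure supported in the ball B_{R₀} of ℝ^{2d} and let (f_t, 𝒯) be a measure-valued solution of the kinetic flocking equation on [0,T*) with initial datum f₀. Then there exists a constant C > 0 depending only on R₀ (and on Φ, G, F, α) such that supp f_t ⊂ B_{R(t)} for all t ∈ [0,T*), where R(t) = R₀ e^{Ct} + C (e^{Ct} − 1)^{1/2}. -/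

import Mathlib

open MeasureTheory Filter
open scoped RealInnerProductSpace BigOperators ENNReal

noncomputable section

abbrev Euc (d : ℕ) := EuclideanSpace ℝ (Fin d)

abbrev Phase (d : ℕ) := Euc d × Euc d

/-- Euclidean norm on the phase space ℝ^d × ℝ^d ≅ ℝ^{2d}. -/
noncomputable def pnorm {d : ℕ} (z : Phase d) : ℝ :=
  Real.sqrt (‖z.1‖ ^ 2 + ‖z.2‖ ^ 2)

/-- Closed ball of radius `R` (Euclidean norm) in the phase space ℝ^{2d}. -/
def pball (d : ℕ) (R : ℝ) : Set (Phase d) := {z | pnorm z ≤ R}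

/-- Velocity fluctuation 𝒢[f]. -/
noncomputable def velFluc {d : ℕ} (f : Measure (Phase d)) : ℝ :=
  (∫ z, ‖z.2‖ ^ 2 ∂f) - ‖∫ z, z.2 ∂f‖ ^ 2

/-- Position fluctuation Γ[f]. -/
noncomputable def posFluc {d : ℕ} (f : Measure (Phase d)) : ℝ :=
  (∫ z, ‖z.1‖ ^ 2 ∂f) - ‖∫ z, z.1 ∂f‖ ^ 2

/-- Interaction field H_[f]. -/
noncomputable def Hfield {d : ℕ} (Φ : ℝ → ℝ) (G : Euc d → Euc d) (F : ℝ → ℝ) (α : ℝ)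
    (f : Measure (Phase d)) (x v : Euc d) : Euc d :=
  - (∫ z, Φ ‖x - z.1‖ • G (v - z.2) ∂f)
    + velFluc f ^ ((2 * α - 1) / 2) • ∫ z, F (‖x - z.1‖ ^ 2) • (x - z.1) ∂f

/-- A family of compactly supported Borel probability measures is a weak solution of the
kinetic flocking equation on the time set `I` if for every `C¹` test function `φ` the map
`t ↦ ∫ φ d f_t` is differentiable (within `I`) with the stated derivative. -/
def IsWeakSolution {d : ℕ} (Φ : ℝ → ℝ) (G : Euc d → Euc d) (F : ℝ → ℝ) (α : ℝ)
    (I : Set ℝ) (f : ℝ → Measure (Phase d)) : Prop :=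
  (∀ t ∈ I, IsProbabilityMeasure (f t) ∧ ∃ K : Set (Phase d), IsCompact K ∧ f t Kᶜ = 0) ∧
  ∀ φ : Phase d → ℝ, ContDiff ℝ 1 φ → ∀ t ∈ I,
    HasDerivWithinAt (fun s => ∫ z, φ z ∂(f s))
      (∫ z, fderiv ℝ φ z (z.2, Hfield Φ G F α (f t) z.1 z.2) ∂(f t)) I t

/-- Measure-valued solution of the kinetic flocking equation on a time set `I ∋ 0`,
given by a family of compactly supported probability measures together with a flow map `𝒯`. -/
def IsMVSolution {d : ℕ} (Φ : ℝ → ℝ) (G : Euc d → Euc d) (F : ℝ → ℝ) (α : ℝ)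
    (I : Set ℝ) (f₀ : Measure (Phase d)) (f : ℝ → Measure (Phase d))
    (T : ℝ → Phase d → Phase d) : Prop :=
  (0 : ℝ) ∈ I ∧
  ContinuousOn (fun p : ℝ × Phase d => T p.1 p.2) (I ×ˢ Set.univ) ∧
  T 0 = id ∧
  (∀ t ∈ I, IsProbabilityMeasure (f t) ∧ ∃ K : Set (Phase d), IsCompact K ∧ f t Kᶜ = 0) ∧
  (∀ z₀ : Phase d, ∀ t ∈ I,
    HasDerivWithinAt (fun s => T s z₀)
      ((T t z₀).2, Hfield Φ G F α (f t) (T t z₀).1 (T t z₀).2) I t) ∧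
  (∀ t ∈ I, f t = f₀.map (T t))

/-- `π` is a coupling of `f` and `g`. -/
def IsCoupling {d : ℕ} (π : Measure (Phase d × Phase d)) (f g : Measure (Phase d)) : Prop :=
  π.map Prod.fst = f ∧ π.map Prod.snd = g

/-- The Monge–Kantorovich–Rubinstein distance W₁ (with the Euclidean cost on ℝ^{2d}). -/
noncomputable def W1 {d : ℕ} (f g : Measure (Phase d)) : ℝ :=
  sInf {c : ℝ | ∃ π : Measure (Phase d × Phase d), IsProbabilityMeasure π ∧ IsCoupling π f g ∧
    Integrable (fun p => pnorm (p.1 - p.2)) π ∧ c = ∫ p, pnorm (p.1 - p.2) ∂π}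

end



section Aux

variable {d : ℕ}

lemma pnorm_nonneg (z : Phase d) : 0 ≤ pnorm z := Real.sqrt_nonneg _

lemma norm_fst_le_pnorm (z : Phase d) : ‖z.1‖ ≤ pnorm z :=
  Real.le_sqrt_of_sq_le (by nlinarith [sq_nonneg ‖z.2‖])

lemma norm_snd_le_pnorm (z : Phase d) : ‖z.2‖ ≤ pnorm z :=
  Real.le_sqrt_of_sq_le (by nlinarith [sq_nonneg ‖z.1‖])

lemma pnorm_le_add (z : Phase d) : pnorm z ≤ ‖z.1‖ + ‖z.2‖ := by
  have h : ‖z.1‖ ^ 2 + ‖z.2‖ ^ 2 ≤ (‖z.1‖ + ‖z.2‖) ^ 2 := by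
    nlinarith [norm_nonneg z.1, norm_nonneg z.2]
  calc pnorm z ≤ Real.sqrt ((‖z.1‖ + ‖z.2‖) ^ 2) := Real.sqrt_le_sqrt h
    _ = ‖z.1‖ + ‖z.2‖ := Real.sqrt_sq (by positivity)

lemma pnorm_le_two_norm (z : Phase d) : pnorm z ≤ 2 * ‖z‖ := by
  have h1 : ‖z.1‖ ≤ ‖z‖ := norm_fst_le z
  have h2 : ‖z.2‖ ≤ ‖z‖ := norm_snd_le z
  linarith [pnorm_le_add z]

lemma pnorm_add_le (x y : Phase d) : pnorm (x + y) ≤ pnorm x + pnorm y := by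
  have ha : 0 ≤ ‖x.1‖ ^ 2 + ‖x.2‖ ^ 2 := by positivity
  have hb : 0 ≤ ‖y.1‖ ^ 2 + ‖y.2‖ ^ 2 := by positivity
  have hA := Real.sq_sqrt ha
  have hB := Real.sq_sqrt hb
  have hcs : (‖x.1‖ * ‖y.1‖ + ‖x.2‖ * ‖y.2‖) ^ 2 ≤ (‖x.1‖ ^ 2 + ‖x.2‖ ^ 2) * (‖y.1‖ ^ 2 + ‖y.2‖ ^ 2) := by
    nlinarith [sq_nonneg (‖x.1‖ * ‖y.2‖ - ‖x.2‖ * ‖y.1‖)]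
  have hab : ‖x.1‖ * ‖y.1‖ + ‖x.2‖ * ‖y.2‖ ≤
      Real.sqrt (‖x.1‖ ^ 2 + ‖x.2‖ ^ 2) * Real.sqrt (‖y.1‖ ^ 2 + ‖y.2‖ ^ 2) := by
    have := Real.le_sqrt_of_sq_le hcs
    rwa [Real.sqrt_mul ha] at this
  have hkey : ‖(x + y).1‖ ^ 2 + ‖(x + y).2‖ ^ 2 ≤
      (Real.sqrt (‖x.1‖ ^ 2 + ‖x.2‖ ^ 2) + Real.sqrt (‖y.1‖ ^ 2 + ‖y.2‖ ^ 2)) ^ 2 := by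
    have h1 : ‖(x + y).1‖ ≤ ‖x.1‖ + ‖y.1‖ := norm_add_le _ _
    have h2 : ‖(x + y).2‖ ≤ ‖x.2‖ + ‖y.2‖ := norm_add_le _ _
    have h1' : ‖(x + y).1‖ ^ 2 ≤ (‖x.1‖ + ‖y.1‖) ^ 2 := by
      nlinarith [norm_nonneg (x + y).1]
    have h2' : ‖(x + y).2‖ ^ 2 ≤ (‖x.2‖ + ‖y.2‖) ^ 2 := by
      nlinarith [norm_nonneg (x + y).2]
    nlinarith [hA, hB, hab]
  calc pnorm (x + y)
      ≤ Real.sqrt ((Real.sqrt (‖x.1‖ ^ 2 + ‖x.2‖ ^ 2) + Real.sqrt (‖y.1‖ ^ 2 + ‖y.2‖ ^ 2)) ^ 2) :=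
        Real.sqrt_le_sqrt hkey
    _ = _ := Real.sqrt_sq (by positivity)

lemma continuous_pnorm : Continuous (pnorm (d := d)) :=
  Real.continuous_sqrt.comp (((continuous_fst.norm).pow 2).add ((continuous_snd.norm).pow 2))

lemma mem_pball {R : ℝ} {z : Phase d} : z ∈ pball d R ↔ pnorm z ≤ R := Iff.rfl

lemma isClosed_pball (d : ℕ) (R : ℝ) : IsClosed (pball d R) :=
  isClosed_le continuous_pnorm continuous_const

lemma isCompact_pball (d : ℕ) (R : ℝ) : IsCompact (pball d R) := by
  apply Metric.isCompact_of_isClosed_isBounded (isClosed_pball d R)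
  apply Bornology.IsBounded.subset (Metric.isBounded_closedBall (x := (0 : Phase d)) (r := R))
  intro z hz
  rw [Metric.mem_closedBall, dist_zero_right]
  have h1 : ‖z.1‖ ≤ R := (norm_fst_le_pnorm z).trans hz
  have h2 : ‖z.2‖ ≤ R := (norm_snd_le_pnorm z).trans hz
  rw [Prod.norm_def]
  exact max_le h1 h2

/-- The Gronwall comparison function. -/
noncomputable def SGron (R₀ ε A K u : ℝ) : ℝ :=
  (R₀ + ε) * Real.exp (K * u) + (A / K) * (Real.exp (K * u) - 1)

lemma SGron_hasDerivAt {A K : ℝ} (hK : K ≠ 0) (R₀ ε u : ℝ) :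
    HasDerivAt (SGron R₀ ε A K) (K * SGron R₀ ε A K u + A) u := by
  have hlin : HasDerivAt (fun x : ℝ => K * x) K u := by
    simpa using (hasDerivAt_id u).const_mul K
  have he := hlin.exp
  have h1 := (he.const_mul (R₀ + ε)).add ((he.sub_const 1).const_mul (A / K))
  refine h1.congr_deriv ?_
  unfold SGron
  field_simp
  ring

lemma SGron_continuous (R₀ ε A K : ℝ) : Continuous (SGron R₀ ε A K) := by
  unfold SGron
  fun_prop

lemma SGron_zero (R₀ ε A K : ℝ) : SGron R₀ ε A K 0 = R₀ + ε := by
  simp [SGron]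

lemma SGron_ge {R₀ ε A K u : ℝ} (hR : 0 ≤ R₀ + ε) (hAK : 0 ≤ A / K) (hKu : 0 ≤ K * u) :
    R₀ + ε ≤ SGron R₀ ε A K u := by
  have h1 : 1 ≤ Real.exp (K * u) := Real.one_le_exp hKu
  have h2 : 0 ≤ (A / K) * (Real.exp (K * u) - 1) := mul_nonneg hAK (by linarith)
  unfold SGron
  nlinarith

end Aux


lemma alpha_eq_one {d : ℕ} (hd : 1 ≤ d) (Φ : ℝ → ℝ) (G : Euc d → Euc d) {α : ℝ}
    (hα : 1 ≤ α) {Gs Φs C₀ : ℝ} (hGs : 0 < Gs) (hΦs : 0 < Φs) (hC₀ : 0 < C₀)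
    (hGcoer : ∀ v : Euc d, Gs * ‖v‖ ^ (2 * α) ≤ ⟪G v, v⟫)
    (hΦlow : ∀ x : Euc d, Φs ≤ Φ ‖x‖)
    (hgrowth : ∀ x v : Euc d, ‖Φ ‖x‖ • G v‖ ≤ C₀ * (1 + ‖x‖ + ‖v‖)) : α = 1 := by
  by_contra hne
  have hgt : 1 < α := lt_of_le_of_ne hα (Ne.symm hne)
  set β : ℝ := 2 * α - 2 with hβdef
  have hβpos : 0 < β := by rw [hβdef]; linarith
  set M : ℝ := 2 * C₀ / (Gs * Φs) with hMdef
  have hM : 0 < M := by rw [hMdef]; positivity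
  set tt : ℝ := max 1 ((M + 1) ^ (β⁻¹ : ℝ)) with httdef
  have htt1 : 1 ≤ tt := le_max_left _ _
  have htt0 : 0 < tt := by linarith
  set e : Euc d := EuclideanSpace.single (⟨0, hd⟩ : Fin d) (1 : ℝ) with hedef
  have he : ‖e‖ = 1 := by rw [hedef, EuclideanSpace.norm_single]; norm_num
  set v : Euc d := tt • e with hvdef
  have hv : ‖v‖ = tt := by
    rw [hvdef, norm_smul, he, Real.norm_eq_abs, abs_of_pos htt0, mul_one]
  have h1 : Gs * tt ^ (2 * α) ≤ ⟪G v, v⟫ := by have := hGcoer v; rwa [hv] at this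
  have h2 : ⟪G v, v⟫ ≤ ‖G v‖ * tt := by
    have := real_inner_le_norm (G v) v; rwa [hv] at this
  have h3 : Φs * ‖G v‖ ≤ C₀ * (1 + tt) := by
    have hg := hgrowth 0 v
    rw [norm_zero, norm_smul, Real.norm_eq_abs, hv] at hg
    have hΦ0 : Φs ≤ |Φ 0| := by
      have := hΦlow 0
      rw [norm_zero] at this
      exact this.trans (le_abs_self _)
    calc Φs * ‖G v‖ ≤ |Φ 0| * ‖G v‖ := mul_le_mul_of_nonneg_right hΦ0 (norm_nonneg _)
      _ ≤ C₀ * (1 + 0 + tt) := hg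
      _ = C₀ * (1 + tt) := by ring
  have hGv : ‖G v‖ ≤ C₀ * (1 + tt) / Φs := by rw [le_div_iff₀ hΦs]; linarith
  have hrw : tt ^ (2 * α) = tt ^ β * tt ^ (2 : ℕ) := by
    have h : (2 * α : ℝ) = β + 2 := by rw [hβdef]; ring
    rw [h, Real.rpow_add htt0, Real.rpow_two]
  have hchain : Gs * (tt ^ β * tt ^ (2 : ℕ)) ≤ (2 * C₀ / Φs) * tt ^ (2 : ℕ) := by
    calc Gs * (tt ^ β * tt ^ (2 : ℕ)) = Gs * tt ^ (2 * α) := by rw [hrw]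
      _ ≤ ‖G v‖ * tt := h1.trans h2
      _ ≤ (C₀ * (1 + tt) / Φs) * tt := mul_le_mul_of_nonneg_right hGv htt0.le
      _ ≤ (2 * C₀ / Φs) * tt ^ (2 : ℕ) := by
          rw [div_mul_eq_mul_div, div_mul_eq_mul_div, div_le_div_iff₀ hΦs hΦs]
          have h6 : tt ≤ tt ^ 2 := by nlinarith
          nlinarith [mul_pos hC₀ hΦs, h6]
  have htβ : tt ^ β ≤ M := by
    have htt2 : (0 : ℝ) < tt ^ (2 : ℕ) := by positivity
    have h5 : Gs * tt ^ β ≤ 2 * C₀ / Φs := by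
      have := le_of_mul_le_mul_right (by nlinarith [hchain] : (Gs * tt ^ β) * tt ^ (2:ℕ) ≤ (2 * C₀ / Φs) * tt ^ (2:ℕ)) htt2
      exact this
    have h6 : Gs * tt ^ β * Φs ≤ 2 * C₀ := (le_div_iff₀ hΦs).mp h5
    rw [hMdef, le_div_iff₀ (by positivity : (0:ℝ) < Gs * Φs)]
    nlinarith [h6]
  have htβ' : M + 1 ≤ tt ^ β := by
    have h4 : ((M + 1) ^ (β⁻¹ : ℝ)) ^ β ≤ tt ^ β :=
      Real.rpow_le_rpow (Real.rpow_nonneg (by positivity) _) (le_max_right _ _) hβpos.le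
    rwa [← Real.rpow_mul (by positivity), inv_mul_cancel₀ hβpos.ne', Real.rpow_one] at h4
  linarith

open scoped Topology

set_option maxHeartbeats 2000000 in
/-- explicit control of the growth of the support of the solution,
with a constant depending only on `R₀` (and on Φ, G, F, α). -/
theorem stmt11 {d : ℕ} (hd : 1 ≤ d) (Φ F : ℝ → ℝ) (G : Euc d → Euc d) (α : ℝ)
    (hΦc : Continuous Φ) (hGc : Continuous G) (hFc : Continuous F)
    (hα : 1 ≤ α ∧ α < 3 / 2)
    (hα' : α < 5 / 4)
    (hΦlip : LocallyLipschitz (fun x : Euc d => Φ ‖x‖))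
    (hGlip : LocallyLipschitz G)
    (hFlip : LocallyLipschitz (fun x : Euc d => F (‖x‖ ^ 2) • x))
    (Gs Φs Fs C₀ : ℝ) (hGs : 0 < Gs) (hΦs : 0 < Φs) (hC₀ : 0 < C₀)
    (hGodd : ∀ v : Euc d, G (-v) = -G v)
    (hGcoer : ∀ v : Euc d, Gs * ‖v‖ ^ (2 * α) ≤ ⟪G v, v⟫)
    (hΦlow : ∀ x : Euc d, Φs ≤ Φ ‖x‖)
    (hFbd : ∀ x : Euc d, ‖F (‖x‖ ^ 2) • x‖ ≤ Fs)
    (hFs : Fs < (2 : ℝ) ^ (α - 1 / 2) * Φs * Gs)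
    (hgrowth : ∀ x v : Euc d, ‖Φ ‖x‖ • G v‖ ≤ C₀ * (1 + ‖x‖ + ‖v‖)) :
    ∀ R₀ > (0 : ℝ), ∃ C > (0 : ℝ),
      ∀ (Ts : ℝ) (f₀ : Measure (Phase d)) (f : ℝ → Measure (Phase d))
        (𝒯 : ℝ → Phase d → Phase d),
        IsProbabilityMeasure f₀ → f₀ (pball d R₀)ᶜ = 0 →
        IsMVSolution Φ G F α (Set.Ico 0 Ts) f₀ f 𝒯 →
        ∀ t ∈ Set.Ico (0 : ℝ) Ts,
          f t (pball d (R₀ * Real.exp (C * t) + C * Real.sqrt (Real.exp (C * t) - 1)))ᶜ = 0 := by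
  have hα1 : α = 1 := alpha_eq_one hd Φ G hα.1 hGs hΦs hC₀ hGcoer hΦlow hgrowth
  subst hα1
  intro R₀ hR₀
  have hFs0 : 0 ≤ Fs := (norm_nonneg _).trans (hFbd 0)
  set A : ℝ := 2 * C₀ with hAdef
  set K : ℝ := 2 * (4 * C₀ + Fs + 1) with hKdef
  have hK : 0 < K := by rw [hKdef]; linarith
  have hA : 0 < A := by rw [hAdef]; linarith
  have hAK0 : 0 ≤ A / K := by positivity
  refine ⟨max (2 * K) (A / K), lt_of_lt_of_le (by linarith) (le_max_left _ _), ?_⟩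
  set C : ℝ := max (2 * K) (A / K) with hCdef
  have hCge2K : 2 * K ≤ C := le_max_left _ _
  have hCgeAK : A / K ≤ C := le_max_right _ _
  have hC0 : 0 < C := lt_of_lt_of_le (by linarith) hCge2K
  intro Ts f₀ f 𝒯 hprob0 hsupp0 hsol t ht
  obtain ⟨hI0, hTcont, hT0, hfprop, hTderiv, hfmap⟩ := hsol
  -- continuity of the time slices of the flow
  have hslice : ∀ s ∈ Set.Ico (0 : ℝ) Ts, Continuous (𝒯 s) := by
    intro s hs
    rw [← continuousOn_univ]
    exact hTcont.comp ((continuous_const.prodMk continuous_id).continuousOn)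
      (fun z _ => ⟨hs, trivial⟩)
  -- transfer of support bounds through the flow
  have htransfer : ∀ s ∈ Set.Ico (0 : ℝ) Ts, ∀ ρ : ℝ,
      (∀ z ∈ pball d R₀, pnorm (𝒯 s z) ≤ ρ) → f s (pball d ρ)ᶜ = 0 := by
    intro s hs ρ hρ
    rw [hfmap s hs, Measure.map_apply ((hslice s hs).measurable)
      (isClosed_pball d ρ).measurableSet.compl]
    apply measure_mono_null _ hsupp0
    intro z hz
    simp only [Set.mem_preimage, Set.mem_compl_iff] at hz ⊢
    exact fun hzK => hz (hρ z hzK)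
  -- the key Gronwall-type estimate
  have key : ∀ ε > (0 : ℝ), ∀ s ∈ Set.Ico (0 : ℝ) Ts, ∀ z ∈ pball d R₀,
      pnorm (𝒯 s z) < SGron R₀ ε A K s := by
    intro ε hε
    by_contra hbad
    push_neg at hbad
    obtain ⟨s₀, hs₀I, z₀', hz₀'K, hbad₀⟩ := hbad
    set Bad : Set ℝ := {s | s ∈ Set.Ico (0 : ℝ) Ts ∧
      ∃ z ∈ pball d R₀, SGron R₀ ε A K s ≤ pnorm (𝒯 s z)} with hBaddef
    have hBadne : Bad.Nonempty := ⟨s₀, hs₀I, z₀', hz₀'K, hbad₀⟩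
    have hBadbdd : BddBelow Bad := ⟨0, fun x hx => hx.1.1⟩
    set tc : ℝ := sInf Bad with htcdef
    have htc0 : 0 ≤ tc := le_csInf hBadne (fun x hx => hx.1.1)
    have htclt : tc < Ts := by
      obtain ⟨b, hb⟩ := hBadne
      exact lt_of_le_of_lt (csInf_le hBadbdd hb) hb.1.2
    have htcI : tc ∈ Set.Ico (0 : ℝ) Ts := ⟨htc0, htclt⟩
    -- strictly good below tc
    have hgood : ∀ u, 0 ≤ u → u < tc → ∀ z ∈ pball d R₀,
        pnorm (𝒯 u z) < SGron R₀ ε A K u := by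
      intro u hu0 hu z hz
      by_contra hge
      push_neg at hge
      have hu2 : u < sInf Bad := by rw [← htcdef]; exact hu
      have hnot : u ∉ Bad := notMem_of_lt_csInf hu2 hBadbdd
      exact hnot ⟨⟨hu0, hu.trans htclt⟩, z, hz, hge⟩
    -- tc itself is bad (limit of bad times, compactness of the initial ball)
    have hbadtc : ∃ z ∈ pball d R₀, SGron R₀ ε A K tc ≤ pnorm (𝒯 tc z) := by
      have hcl : tc ∈ closure Bad := csInf_mem_closure hBadne hBadbdd
      obtain ⟨u, hu_mem, hu_lim⟩ := mem_closure_iff_seq_limit.mp hcl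
      choose zs hzs1 hzs2 using fun n => (hu_mem n).2
      obtain ⟨zl, hzlK, φ, hφmono, hφlim⟩ := (isCompact_pball d R₀).tendsto_subseq hzs1
      have hulim' : Tendsto (u ∘ φ) atTop (𝓝 tc) := hu_lim.comp hφmono.tendsto_atTop
      have hpair : Tendsto (fun n => ((u (φ n), zs (φ n)) : ℝ × Phase d)) atTop
          (𝓝[(Set.Ico (0 : ℝ) Ts) ×ˢ (Set.univ : Set (Phase d))] (tc, zl)) := by
        apply tendsto_nhdsWithin_of_tendsto_nhds_of_eventually_within
        · exact hulim'.prodMk_nhds hφlim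
        · exact Filter.Eventually.of_forall (fun n => ⟨(hu_mem (φ n)).1, trivial⟩)
      have hTlim : Tendsto (fun n => 𝒯 (u (φ n)) (zs (φ n))) atTop (𝓝 (𝒯 tc zl)) := by
        have hcw := hTcont (tc, zl) ⟨htcI, trivial⟩
        exact hcw.tendsto.comp hpair
      have h1 : Tendsto (fun n => pnorm (𝒯 (u (φ n)) (zs (φ n)))) atTop
          (𝓝 (pnorm (𝒯 tc zl))) := (continuous_pnorm.tendsto _).comp hTlim
      have h2 : Tendsto (fun n => SGron R₀ ε A K (u (φ n))) atTop
          (𝓝 (SGron R₀ ε A K tc)) := ((SGron_continuous R₀ ε A K).tendsto _).comp hulim'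
      exact ⟨zl, hzlK, le_of_tendsto_of_tendsto' h2 h1 (fun n => hzs2 (φ n))⟩
    obtain ⟨zb, hzbK, hzbge⟩ := hbadtc
    -- MVT estimate up to time tc, for every initial point in the ball
    have hmvt : ∀ z ∈ pball d R₀, pnorm (𝒯 tc z) ≤ SGron R₀ ε A K tc - ε := by
      intro z hz
      have hfc : ContinuousOn (fun u => 𝒯 u z - z) (Set.Icc 0 tc) := by
        apply ContinuousOn.sub _ continuousOn_const
        exact hTcont.comp ((continuous_id.prodMk continuous_const).continuousOn)
          (fun u hu => ⟨⟨hu.1, lt_of_le_of_lt hu.2 htclt⟩, trivial⟩)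
      have hfd : ∀ u ∈ Set.Ico (0 : ℝ) tc, HasDerivWithinAt (fun u => 𝒯 u z - z)
          ((𝒯 u z).2, Hfield Φ G F 1 (f u) (𝒯 u z).1 (𝒯 u z).2) (Set.Ici u) u := by
        intro u hu
        have huI : u ∈ Set.Ico (0 : ℝ) Ts := ⟨hu.1, lt_trans hu.2 htclt⟩
        have hmem : Set.Ico (0 : ℝ) Ts ∈ 𝓝[Set.Ici u] u := by
          rw [mem_nhdsWithin]
          exact ⟨Set.Iio Ts, isOpen_Iio, huI.2, fun y hy => ⟨le_trans huI.1 hy.2, hy.1⟩⟩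
        exact ((hTderiv z u huI).mono_of_mem_nhdsWithin hmem).sub_const z
      have hBd : ∀ u : ℝ, HasDerivAt (fun u => (SGron R₀ ε A K u - (R₀ + ε)) / 2)
          ((K * SGron R₀ ε A K u + A) / 2) u :=
        fun u => ((SGron_hasDerivAt hK.ne' R₀ ε u).sub_const _).div_const 2
      have hbound : ∀ u ∈ Set.Ico (0 : ℝ) tc,
          ‖((𝒯 u z).2, Hfield Φ G F 1 (f u) (𝒯 u z).1 (𝒯 u z).2)‖
            ≤ (K * SGron R₀ ε A K u + A) / 2 := by
        intro u hu
        have huI : u ∈ Set.Ico (0 : ℝ) Ts := ⟨hu.1, lt_trans hu.2 htclt⟩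
        set ρ : ℝ := SGron R₀ ε A K u with hρdef
        have hρR : R₀ + ε ≤ ρ := SGron_ge (by linarith) hAK0 (mul_nonneg hK.le hu.1)
        clear_value ρ
        have hρ0 : 0 ≤ ρ := by linarith
        have hzlt : pnorm (𝒯 u z) < ρ := by rw [hρdef]; exact hgood u hu.1 hu.2 z hz
        have hXle : ‖(𝒯 u z).1‖ ≤ ρ := le_trans (norm_fst_le_pnorm _) hzlt.le
        have hVle : ‖(𝒯 u z).2‖ ≤ ρ := le_trans (norm_snd_le_pnorm _) hzlt.le
        have hsupp : f u (pball d ρ)ᶜ = 0 := by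
          apply htransfer u huI ρ
          intro z' hz'
          rw [hρdef]
          exact (hgood u hu.1 hu.2 z' hz').le
        have hprobu : IsProbabilityMeasure (f u) := (hfprop u huI).1
        have hae : ∀ᵐ w ∂(f u), pnorm w ≤ ρ := by
          rw [MeasureTheory.ae_iff]
          have hseteq : {w : Phase d | ¬ pnorm w ≤ ρ} = (pball d ρ)ᶜ := by
            ext w; simp [pball]
          rw [hseteq]; exact hsupp
        set X := (𝒯 u z).1 with hXdef
        set V := (𝒯 u z).2 with hVdef
        clear_value X V
        have hI1 : ‖∫ w, Φ ‖X - w.1‖ • G (V - w.2) ∂(f u)‖ ≤ C₀ * (1 + 4 * ρ) := by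
          have hb : ∀ᵐ w ∂(f u), ‖Φ ‖X - w.1‖ • G (V - w.2)‖ ≤ C₀ * (1 + 4 * ρ) := by
            filter_upwards [hae] with w hw
            have hw1 : ‖w.1‖ ≤ ρ := (norm_fst_le_pnorm w).trans hw
            have hw2 : ‖w.2‖ ≤ ρ := (norm_snd_le_pnorm w).trans hw
            have h1 : ‖X - w.1‖ ≤ 2 * ρ := (norm_sub_le _ _).trans (by linarith)
            have h2 : ‖V - w.2‖ ≤ 2 * ρ := (norm_sub_le _ _).trans (by linarith)
            calc ‖Φ ‖X - w.1‖ • G (V - w.2)‖ ≤ C₀ * (1 + ‖X - w.1‖ + ‖V - w.2‖) :=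
                  hgrowth _ _
              _ ≤ C₀ * (1 + 4 * ρ) := by nlinarith [hC₀.le]
          have := MeasureTheory.norm_integral_le_of_norm_le_const hb
          simpa [measure_univ] using this
        have hI2 : ‖∫ w, F (‖X - w.1‖ ^ 2) • (X - w.1) ∂(f u)‖ ≤ Fs := by
          have hb : ∀ᵐ w ∂(f u), ‖F (‖X - w.1‖ ^ 2) • (X - w.1)‖ ≤ Fs :=
            Filter.Eventually.of_forall (fun w => hFbd (X - w.1))
          have := MeasureTheory.norm_integral_le_of_norm_le_const hb
          simpa [measure_univ] using this
        have hvf : velFluc (f u) ≤ ρ ^ 2 := by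
          have h1 : |∫ w, ‖w.2‖ ^ 2 ∂(f u)| ≤ ρ ^ 2 := by
            have hb : ∀ᵐ w ∂(f u), ‖(‖w.2‖ ^ 2)‖ ≤ ρ ^ 2 := by
              filter_upwards [hae] with w hw
              have hw2 : ‖w.2‖ ≤ ρ := (norm_snd_le_pnorm w).trans hw
              rw [Real.norm_eq_abs, abs_of_nonneg (by positivity)]
              nlinarith [norm_nonneg w.2]
            have := MeasureTheory.norm_integral_le_of_norm_le_const hb
            simpa [measure_univ, Real.norm_eq_abs] using this
          have h2 : (0 : ℝ) ≤ ‖∫ w, w.2 ∂(f u)‖ ^ 2 := by positivity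
          unfold velFluc
          have := le_abs_self (∫ w, ‖w.2‖ ^ 2 ∂(f u))
          linarith
        have hsc : |velFluc (f u) ^ ((2 * (1:ℝ) - 1) / 2)| ≤ ρ := by
          rw [show ((2 * (1:ℝ) - 1) / 2) = (1/2 : ℝ) by norm_num]
          rcases le_or_gt 0 (velFluc (f u)) with hv0 | hv0
          · rw [abs_of_nonneg (Real.rpow_nonneg hv0 _)]
            calc velFluc (f u) ^ ((1:ℝ)/2) ≤ (ρ ^ 2) ^ ((1:ℝ)/2) :=
                  Real.rpow_le_rpow hv0 hvf (by norm_num)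
              _ = ρ := by
                  rw [← Real.rpow_natCast ρ 2, ← Real.rpow_mul hρ0]
                  norm_num
          · rw [Real.rpow_def_of_neg hv0,
              show (1/2 : ℝ) * Real.pi = Real.pi / 2 by ring, Real.cos_pi_div_two,
              mul_zero, abs_zero]
            exact hρ0
        have hH : ‖Hfield Φ G F 1 (f u) X V‖ ≤ C₀ * (1 + 4 * ρ) + ρ * Fs := by
          unfold Hfield
          calc ‖-(∫ w, Φ ‖X - w.1‖ • G (V - w.2) ∂(f u))
                + velFluc (f u) ^ ((2 * (1:ℝ) - 1) / 2) •
                  ∫ w, F (‖X - w.1‖ ^ 2) • (X - w.1) ∂(f u)‖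
              ≤ ‖∫ w, Φ ‖X - w.1‖ • G (V - w.2) ∂(f u)‖
                + ‖velFluc (f u) ^ ((2 * (1:ℝ) - 1) / 2) •
                    ∫ w, F (‖X - w.1‖ ^ 2) • (X - w.1) ∂(f u)‖ := by
                rw [← norm_neg (∫ w, Φ ‖X - w.1‖ • G (V - w.2) ∂(f u))] ; exact norm_add_le _ _
            _ ≤ C₀ * (1 + 4 * ρ) + ρ * Fs := by
                rw [norm_smul, Real.norm_eq_abs]
                exact add_le_add hI1 (mul_le_mul hsc hI2 (norm_nonneg _) hρ0)
        rw [Prod.norm_def]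
        have hKA : (K * ρ + A) / 2 = (4 * C₀ + Fs + 1) * ρ + C₀ := by
          rw [hKdef, hAdef]; ring
        apply max_le
        · rw [hKA]; nlinarith [hFs0, hC₀.le, hρ0, hVle]
        · rw [hKA]
          calc ‖Hfield Φ G F 1 (f u) X V‖ ≤ C₀ * (1 + 4 * ρ) + ρ * Fs := hH
            _ ≤ (4 * C₀ + Fs + 1) * ρ + C₀ := by nlinarith [hρ0]
      have h0 : ‖𝒯 0 z - z‖ ≤ (SGron R₀ ε A K 0 - (R₀ + ε)) / 2 := by
        rw [hT0, SGron_zero]; simp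
      have happ := image_norm_le_of_norm_deriv_right_le_deriv_boundary
        hfc hfd h0 hBd hbound (Set.right_mem_Icc.mpr htc0)
      have hp1 : pnorm (𝒯 tc z) ≤ pnorm z + pnorm (𝒯 tc z - z) := by
        have h := pnorm_add_le z (𝒯 tc z - z)
        have e : z + (𝒯 tc z - z) = 𝒯 tc z := by abel
        rwa [e] at h
      have hp2 : pnorm (𝒯 tc z - z) ≤ 2 * ‖𝒯 tc z - z‖ := pnorm_le_two_norm _
      have hz' : pnorm z ≤ R₀ := hz
      linarith
    have := hmvt zb hzbK
    linarith
  -- conclusion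
  have hfinal : ∀ z ∈ pball d R₀,
      pnorm (𝒯 t z) ≤ R₀ * Real.exp (C * t) + C * Real.sqrt (Real.exp (C * t) - 1) := by
    intro z hz
    have ht0 : 0 ≤ t := ht.1
    have hS0 : pnorm (𝒯 t z) ≤ R₀ * Real.exp (K * t) + (A / K) * (Real.exp (K * t) - 1) := by
      apply le_of_forall_sub_le
      intro δ hδ
      set ε : ℝ := δ * Real.exp (-(K * t)) with hεdef
      have hεpos : 0 < ε := by rw [hεdef]; positivity
      have hk := key ε hεpos t ht z hz
      have hεe : ε * Real.exp (K * t) = δ := by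
        rw [hεdef, mul_assoc, ← Real.exp_add]
        simp
      have hSe : SGron R₀ ε A K t
          = R₀ * Real.exp (K * t) + (A / K) * (Real.exp (K * t) - 1) + δ := by
        unfold SGron
        rw [← hεe]; ring
      linarith [hk, hSe ▸ hk]
    refine hS0.trans ?_
    have hKt : K * t ≤ C * t := mul_le_mul_of_nonneg_right (by linarith) ht0
    have he1 : Real.exp (K * t) ≤ Real.exp (C * t) := Real.exp_le_exp.mpr hKt
    have hge1 : 1 ≤ Real.exp (K * t) := Real.one_le_exp (by positivity)
    have hsq : Real.exp (K * t) - 1 ≤ Real.sqrt (Real.exp (C * t) - 1) := by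
      apply Real.le_sqrt_of_sq_le
      have h2 : Real.exp (K * t) * Real.exp (K * t) = Real.exp (2 * K * t) := by
        rw [← Real.exp_add]; ring_nf
      have h3 : Real.exp (2 * K * t) ≤ Real.exp (C * t) := by
        apply Real.exp_le_exp.mpr
        calc 2 * K * t = (2 * K) * t := by ring
          _ ≤ C * t := mul_le_mul_of_nonneg_right hCge2K ht0
      nlinarith [hge1]
    have hterm : (A / K) * (Real.exp (K * t) - 1) ≤ C * Real.sqrt (Real.exp (C * t) - 1) :=
      mul_le_mul hCgeAK hsq (by linarith) hC0.le
    have hterm2 : R₀ * Real.exp (K * t) ≤ R₀ * Real.exp (C * t) :=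
      mul_le_mul_of_nonneg_left he1 hR₀.le
    linarith
  exact htransfer t ht _ hfinal
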